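/- Let n ≥ 5 and let h, k ∈ {1,…,n−1}. Then s_n(z^{(n,h)}, z^{(n,k)}) = (n²·(h − ⌊hk/n⌋)·(k − ⌊hk/n⌋))/(2hk(n−h)(n−k)) · binom(n,h)^{-1} · binom(k, ⌊hk/n⌋) · binom(n−k, h − ⌊hk/n⌋), where ⌊x⌋ denotes the greatest integer less than or equal to x. -/

import Mathlib

/-- `sₙ(x,y) = (2/n!) ∑_{σ ∈ 𝔄ₙ} |(1/n) ∑ⱼ x_{σ(j)} yⱼ|`. -/
noncomputable def snBil (n : ℕ) (x y : Fin n → ℝ) : ℝ :=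
  (2 / (n.factorial : ℝ)) *
    ∑ σ : alternatingGroup (Fin n), |(1 / (n : ℝ)) * ∑ j, x ((σ : Equiv.Perm (Fin n)) j) * y j|

/-- The vector `z^{(n,h)}` with coordinates `n/(2h)` (first `h` coordinates) and
`-n/(2(n-h))` (remaining coordinates). -/
noncomputable def zvec (n h : ℕ) : Fin n → ℝ :=
  fun j => if (j : ℕ) < h then (n : ℝ) / (2 * h) else -((n : ℝ) / (2 * ((n : ℝ) - h)))


open Finset

namespace Stmt13Aux

lemma tele_step (n h k a : ℕ) (hkn : k ≤ n) (hah : a < h) :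
    ((a:ℤ)+1) * ((n:ℤ)-k-h+a+1) * ((k.choose (a+1) : ℤ) * ((n-k).choose (h-(a+1)) : ℤ))
      = ((k:ℤ)-a) * ((h:ℤ)-a) * ((k.choose a : ℤ) * ((n-k).choose (h-a) : ℤ)) := by
  by_cases hak : a < k
  · by_cases hb : h - (a+1) ≤ n - k
    · have e1 : k.choose (a+1) * (a+1) = k.choose a * (k - a) := Nat.choose_succ_right_eq k a
      have e2 : (n-k).choose ((h - (a+1))+1) * ((h-(a+1))+1)
          = (n-k).choose (h-(a+1)) * ((n-k) - (h-(a+1))) := Nat.choose_succ_right_eq _ _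
      have hba : (h - (a+1)) + 1 = h - a := by omega
      rw [hba] at e2
      have hka : ((k - a : ℕ) : ℤ) = (k:ℤ) - a := by omega
      have hha : ((h - a : ℕ) : ℤ) = (h:ℤ) - a := by omega
      have hnk2 : (((n-k) - (h-(a+1)) : ℕ) : ℤ) = (n:ℤ) - k - h + a + 1 := by omega
      have c1 := congrArg (Nat.cast : ℕ → ℤ) e1
      rw [Nat.cast_mul, Nat.cast_mul, hka] at c1
      push_cast at c1
      have c2 := congrArg (Nat.cast : ℕ → ℤ) e2
      rw [Nat.cast_mul, Nat.cast_mul, hha, hnk2] at c2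
      linear_combination ((n:ℤ) - k - h + a + 1) * ((n-k).choose (h-(a+1)) : ℤ) * c1
        - ((k:ℤ) - a) * (k.choose a : ℤ) * c2
    · have z1 : (n-k).choose (h-(a+1)) = 0 := Nat.choose_eq_zero_of_lt (by omega)
      have z2 : (n-k).choose (h-a) = 0 := Nat.choose_eq_zero_of_lt (by omega)
      simp [z1, z2]
  · have z1 : k.choose (a+1) = 0 := Nat.choose_eq_zero_of_lt (by omega)
    rcases eq_or_lt_of_le (not_lt.mp hak) with he | hl
    · simp [z1, he]
    · have z2 : k.choose a = 0 := Nat.choose_eq_zero_of_lt hl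
      simp [z1, z2]

lemma vand (p q r : ℕ) : ∑ a ∈ range (r+1), p.choose a * q.choose (r-a) = (p+q).choose r := by
  rw [Nat.add_choose_eq, Finset.Nat.sum_antidiagonal_eq_sum_range_succ
    (fun i j => p.choose i * q.choose j)]

-- mean: ∑ a * C(k,a) * C(n-k, h-a) * n = h * k * C(n,h)
lemma mean_sum (n h k : ℕ) (h1 : 1 ≤ h) (hh : h ≤ n) (k1 : 1 ≤ k) (hk : k ≤ n) :
    (∑ a ∈ range (h+1), a * (k.choose a * (n-k).choose (h-a))) * n = h * k * n.choose h := by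
  obtain ⟨h', rfl⟩ : ∃ h', h = h' + 1 := ⟨h - 1, by omega⟩
  obtain ⟨k', rfl⟩ : ∃ k', k = k' + 1 := ⟨k - 1, by omega⟩
  obtain ⟨n', rfl⟩ : ∃ n', n = n' + 1 := ⟨n - 1, by omega⟩
  rw [Finset.sum_range_succ']
  simp only [Nat.zero_eq, zero_mul, add_zero]
  have key : ∀ b, (b+1) * ((k'+1).choose (b+1) * (n'+1-(k'+1)).choose (h'+1-(b+1)))
      = (k'+1) * (k'.choose b * (n'-k').choose (h'-b)) := by
    intro b
    have e1 : (k'+1) * k'.choose b = (k'+1).choose (b+1) * (b+1) := Nat.add_one_mul_choose_eq k' b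
    have e2 : n'+1-(k'+1) = n'-k' := by omega
    have e3 : h'+1-(b+1) = h'-b := by omega
    rw [e2, e3]
    calc (b+1) * ((k'+1).choose (b+1) * (n'-k').choose (h'-b))
        = ((k'+1).choose (b+1) * (b+1)) * (n'-k').choose (h'-b) := by ring
      _ = ((k'+1) * k'.choose b) * (n'-k').choose (h'-b) := by rw [e1]
      _ = (k'+1) * (k'.choose b * (n'-k').choose (h'-b)) := by ring
  rw [Finset.sum_congr rfl (fun b _ => key b), ← Finset.mul_sum]
  have e4 : n' - k' = (n'+1) - (k'+1) := by omega
  have hv : ∑ b ∈ range (h'+1), k'.choose b * (n'-k').choose (h'-b) = n'.choose h' := by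
    have := vand k' (n'-k') h'
    rwa [Nat.add_sub_cancel' (by omega : k' ≤ n')] at this
  rw [hv]
  have e5 : (n'+1) * n'.choose h' = (n'+1).choose (h'+1) * (h'+1) := Nat.add_one_mul_choose_eq n' h'
  calc (k'+1) * n'.choose h' * (n'+1) = (k'+1) * ((n'+1) * n'.choose h') := by ring
    _ = (k'+1) * ((n'+1).choose (h'+1) * (h'+1)) := by rw [e5]
    _ = (h'+1) * (k'+1) * (n'+1).choose (h'+1) := by ring

lemma abs_sum_eq (n h k : ℕ) (h1 : 1 ≤ h) (h2 : h ≤ n - 1) (k1 : 1 ≤ k) (k2 : k ≤ n - 1)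
    (hn : 2 ≤ n) :
    ∑ a ∈ range (h+1), (k.choose a : ℤ) * ((n-k).choose (h-a) : ℤ) * |(a:ℤ)*n - h*k|
      = 2 * ((h:ℤ) - (h*k/n : ℕ)) * ((k:ℤ) - (h*k/n : ℕ)) * (k.choose (h*k/n) : ℤ)
          * ((n-k).choose (h - h*k/n) : ℤ) := by
  set m := h*k/n with hm
  have hkn : k ≤ n := by omega
  have hn0 : 0 < n := by omega
  have hmh : m < h := by
    rw [hm, Nat.div_lt_iff_lt_mul hn0]
    exact mul_lt_mul_of_pos_left (by omega : k < n) (by omega : (0:ℕ) < h)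
  have hmk : m < k := by
    rw [hm, Nat.div_lt_iff_lt_mul hn0]
    calc h * k < n * k := mul_lt_mul_of_pos_right (by omega : h < n) (by omega : (0:ℕ) < k)
      _ = k * n := Nat.mul_comm n k
  have hmn : m * n ≤ h * k := Nat.div_mul_le_self (h*k) n
  have hmn2 : h * k < (m+1) * n := (Nat.div_lt_iff_lt_mul hn0).mp (Nat.lt_succ_self m)
  set T : ℕ → ℤ := fun a => (k.choose a : ℤ) * ((n-k).choose (h-a) : ℤ) with hT
  set G : ℕ → ℤ := fun a => (a:ℤ) * ((n:ℤ)-k-h+a) * T a with hG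
  have step : ∀ a < h, T a * ((h:ℤ)*k - a*n) = G (a+1) - G a := by
    intro a ha
    have := tele_step n h k a hkn ha
    simp only [hG, hT]
    push_cast
    linear_combination -this
  have trunc : ∑ a ∈ range (m+1), T a * ((h:ℤ)*k - a*n) = G (m+1) := by
    have hc : ∀ a ∈ range (m+1), T a * ((h:ℤ)*k - a*n) = G (a+1) - G a := by
      intro a ha
      exact step a (by simp only [Finset.mem_range] at ha; omega)
    rw [Finset.sum_congr rfl hc, Finset.sum_range_sub]
    simp [hG, hT]
  have signed : ∑ a ∈ range (h+1), T a * ((a:ℤ)*n - h*k) = 0 := by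
    have hsum : ∑ a ∈ range (h+1), T a = (n.choose h : ℤ) := by
      have hv := vand k (n-k) h
      rw [Nat.add_sub_cancel' hkn] at hv
      simp only [hT]
      exact_mod_cast congrArg (Nat.cast : ℕ → ℤ) hv
    have hmean : (∑ a ∈ range (h+1), (a:ℤ) * T a) * n = (h:ℤ) * k * n.choose h := by
      have hms := congrArg (Nat.cast : ℕ → ℤ) (mean_sum n h k h1 (by omega) k1 hkn)
      push_cast at hms
      simp only [hT]
      push_cast
      linarith [hms]
    calc ∑ a ∈ range (h+1), T a * ((a:ℤ)*n - h*k)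
        = (∑ a ∈ range (h+1), (a:ℤ) * T a) * n - (h:ℤ)*k*(∑ a ∈ range (h+1), T a) := by
          rw [Finset.sum_mul, Finset.mul_sum, ← Finset.sum_sub_distrib]
          apply Finset.sum_congr rfl; intro a _; ring
      _ = 0 := by rw [hmean, hsum]; ring
  have hsplit : range (h+1) = range (m+1) ∪ Ico (m+1) (h+1) := by
    ext x
    simp only [Finset.mem_range, Finset.mem_union, Finset.mem_Ico]
    omega
  have habs1 : ∀ a ∈ range (m+1), T a * |(a:ℤ)*n - h*k| = T a * ((h:ℤ)*k - a*n) := by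
    intro a ha
    simp only [Finset.mem_range] at ha
    have h1' : a * n ≤ h * k := le_trans (Nat.mul_le_mul_right n (by omega)) hmn
    have h2' := (Nat.cast_le (α := ℤ)).mpr h1'
    push_cast at h2'
    rw [abs_of_nonpos (by linarith)]
    ring
  have habs2 : ∀ a ∈ Ico (m+1) (h+1), T a * |(a:ℤ)*n - h*k| = T a * ((a:ℤ)*n - h*k) := by
    intro a ha
    simp only [Finset.mem_Ico] at ha
    have h1' : h * k < a * n := lt_of_lt_of_le hmn2 (Nat.mul_le_mul_right n ha.1)
    have h2' := (Nat.cast_lt (α := ℤ)).mpr h1'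
    push_cast at h2'
    rw [abs_of_nonneg (by linarith)]
  -- main computation
  have key : ∑ a ∈ range (h+1), T a * |(a:ℤ)*n - h*k| = 2 * G (m+1) := by
    have hdisj : Disjoint (range (m+1)) (Ico (m+1) (h+1)) := by
      rw [Finset.disjoint_left]
      intro a ha hb
      simp only [Finset.mem_range] at ha
      simp only [Finset.mem_Ico] at hb
      omega
    rw [hsplit, Finset.sum_union hdisj, Finset.sum_congr rfl habs1, Finset.sum_congr rfl habs2]
    have hsigned2 : ∑ a ∈ range (m+1), T a * ((a:ℤ)*n - h*k)
        + ∑ a ∈ Ico (m+1) (h+1), T a * ((a:ℤ)*n - h*k) = 0 := by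
      rw [← Finset.sum_union hdisj, ← hsplit]; exact signed
    have hneg : ∑ a ∈ range (m+1), T a * ((a:ℤ)*n - h*k)
        = - ∑ a ∈ range (m+1), T a * ((h:ℤ)*k - a*n) := by
      rw [← Finset.sum_neg_distrib]
      apply Finset.sum_congr rfl; intro a _; ring
    rw [hneg] at hsigned2
    linarith [hsigned2, trunc]
  rw [key]
  have hGm := step m hmh  -- T m * (hk - mn) = G (m+1) - G m  -- not needed directly
  -- G (m+1) = (m+1)(n-k-h+m+1) T(m+1) = (k-m)(h-m) T m by tele_step
  have hfin : G (m+1) = ((k:ℤ) - m) * ((h:ℤ) - m) * T m := by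
    have := tele_step n h k m hkn hmh
    simp only [hG, hT]
    push_cast
    linear_combination this
  rw [hfin]
  simp only [hT]
  ring

lemma card_lt (n c : ℕ) (hc : c ≤ n) :
    ((univ : Finset (Fin n)).filter (fun j : Fin n => (j : ℕ) < c)).card = c := by
  rcases Nat.eq_or_lt_of_le hc with rfl | hlt
  · have : (univ : Finset (Fin c)).filter (fun j : Fin c => (j : ℕ) < c) = univ := by
      ext j; simp [j.isLt]
    rw [this, Finset.card_univ, Fintype.card_fin]
  · have : (univ : Finset (Fin n)).filter (fun j : Fin n => (j : ℕ) < c) = Finset.Iio ⟨c, hlt⟩ := by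
      ext j
      simp [Finset.mem_Iio, Fin.lt_def]
    rw [this, Fin.card_Iio]

lemma card_perm_lt (n c : ℕ) (hc : c ≤ n) (σ : Equiv.Perm (Fin n)) :
    ((univ : Finset (Fin n)).filter (fun j : Fin n => ((σ j : Fin n) : ℕ) < c)).card = c := by
  have hb : ((univ : Finset (Fin n)).filter (fun j : Fin n => ((σ j : Fin n) : ℕ) < c)).card
      = ((univ : Finset (Fin n)).filter (fun j : Fin n => (j : ℕ) < c)).card := by
    apply Finset.card_bij (fun j _ => σ j)
    · intro j hj; simp only [Finset.mem_filter, Finset.mem_univ, true_and] at *; exact hj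
    · intro j₁ _ j₂ _ hj; exact σ.injective hj
    · intro j hj
      refine ⟨σ.symm j, ?_, by simp⟩
      simp only [Finset.mem_filter, Finset.mem_univ, true_and] at *
      simpa using hj
  rw [hb, card_lt n c hc]

lemma innerSumEval (n h k : ℕ) (h1 : 1 ≤ h) (h2 : h ≤ n - 1) (k1 : 1 ≤ k) (k2 : k ≤ n - 1)
    (hn : 2 ≤ n) (σ : Equiv.Perm (Fin n)) :
    (1 / (n : ℝ)) * ∑ j, zvec n h (σ j) * zvec n k j
      = (n:ℝ)^2 * ((((univ : Finset (Fin n)).filter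
            (fun j : Fin n => ((σ j : Fin n) : ℕ) < h ∧ (j : ℕ) < k)).card : ℝ) * n - h * k)
        / (4 * h * k * ((n:ℝ) - h) * ((n:ℝ) - k)) := by
  have hnR : (0:ℝ) < n := by positivity
  have hhR : (0:ℝ) < h := by exact_mod_cast h1
  have hkR : (0:ℝ) < k := by exact_mod_cast k1
  have hnh : (h:ℝ) < n := by exact_mod_cast (by omega : h < n)
  have hnk : (k:ℝ) < n := by exact_mod_cast (by omega : k < n)
  set A : ℝ := (n : ℝ) / (2 * h)
  set B : ℝ := -((n : ℝ) / (2 * ((n:ℝ) - h)))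
  set C : ℝ := (n : ℝ) / (2 * k)
  set D : ℝ := -((n : ℝ) / (2 * ((n:ℝ) - k)))
  have expand : ∀ j : Fin n, zvec n h (σ j) * zvec n k j
      = (A - B) * (C - D) * (if ((σ j : Fin n) : ℕ) < h ∧ (j:ℕ) < k then (1:ℝ) else 0)
        + (A - B) * D * (if ((σ j : Fin n) : ℕ) < h then (1:ℝ) else 0)
        + B * (C - D) * (if (j:ℕ) < k then (1:ℝ) else 0)
        + B * D := by
    intro j
    unfold zvec
    by_cases hp : ((σ j : Fin n) : ℕ) < h <;> by_cases hq : (j:ℕ) < k <;>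
      simp [hp, hq, A, B, C, D] <;> ring
  rw [Finset.sum_congr rfl (fun j _ => expand j)]
  rw [Finset.sum_add_distrib, Finset.sum_add_distrib, Finset.sum_add_distrib]
  rw [← Finset.mul_sum, ← Finset.mul_sum, ← Finset.mul_sum]
  rw [Finset.sum_boole, Finset.sum_boole, Finset.sum_boole, Finset.sum_const]
  rw [card_perm_lt n h (by omega) σ, card_lt n k (by omega)]
  simp only [Finset.card_univ, Fintype.card_fin, nsmul_eq_mul]
  have hA : A = (n : ℝ) / (2 * h) := rfl
  have hB : B = -((n : ℝ) / (2 * ((n:ℝ) - h))) := rfl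
  have hC : C = (n : ℝ) / (2 * k) := rfl
  have hD : D = -((n : ℝ) / (2 * ((n:ℝ) - k))) := rfl
  rw [hA, hB, hC, hD]
  have e1 : (n:ℝ) - h ≠ 0 := by linarith
  have e2 : (n:ℝ) - k ≠ 0 := by linarith
  field_simp
  ring

def perm_fiber_equiv (n h : ℕ) (T : Finset (Fin n)) :
    {σ : Equiv.Perm (Fin n) // ∀ j, (((σ j : Fin n) : ℕ) < h ↔ j ∈ T)}
      ≃ ({j : Fin n // j ∈ T} ≃ {j : Fin n // (j:ℕ) < h})
          × ({j : Fin n // j ∉ T} ≃ {j : Fin n // ¬ (j:ℕ) < h}) where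
  toFun σp := ⟨σp.1.subtypeEquiv (fun j => (σp.2 j).symm),
               σp.1.subtypeEquiv (fun j => not_congr (σp.2 j).symm)⟩
  invFun ef := ⟨Equiv.subtypeCongr ef.1 ef.2, by
    intro j
    by_cases hj : j ∈ T
    · simp [Equiv.subtypeCongr, hj, (ef.1 ⟨j, hj⟩).2]
    · have := (ef.2 ⟨j, hj⟩).2
      simp [Equiv.subtypeCongr, hj, this]⟩
  left_inv := by
    rintro ⟨σ, hσ⟩
    ext j
    by_cases hj : j ∈ T
    · simp [Equiv.subtypeCongr, hj]
    · simp [Equiv.subtypeCongr, hj]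
  right_inv := by
    rintro ⟨e, f⟩
    refine Prod.ext ?_ ?_
    · ext j
      rcases j with ⟨j, hj⟩
      simp [Equiv.subtypeCongr, hj]
    · ext j
      rcases j with ⟨j, hj⟩
      simp [Equiv.subtypeCongr, hj]

lemma perm_fiber_card (n h : ℕ) (hh : h ≤ n) (T : Finset (Fin n)) (hT : T.card = h) :
    ((univ : Finset (Equiv.Perm (Fin n))).filter
        (fun σ => ∀ j, (((σ j : Fin n) : ℕ) < h ↔ j ∈ T))).card
      = h.factorial * (n-h).factorial := by
  rw [← Fintype.card_subtype, Fintype.card_congr (perm_fiber_equiv n h T), Fintype.card_prod]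
  have c1 : Fintype.card {j : Fin n // j ∈ T} = h := by
    rw [Fintype.card_coe]
    exact hT
  have c2 : Fintype.card {j : Fin n // (j:ℕ) < h} = h := by
    rw [Fintype.card_subtype]; exact card_lt n h hh
  have c3 : Fintype.card {j : Fin n // j ∉ T} = n - h := by
    rw [Fintype.card_subtype_compl, Fintype.card_fin, c1]
  have c4 : Fintype.card {j : Fin n // ¬ (j:ℕ) < h} = n - h := by
    rw [Fintype.card_subtype_compl, Fintype.card_fin, c2]
  rw [Fintype.card_equiv (Fintype.equivOfCardEq (c1.trans c2.symm)),
    Fintype.card_equiv (Fintype.equivOfCardEq (c3.trans c4.symm)), c1, c3]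

lemma set_fiber_card (n h k a : ℕ) (hk : k ≤ n) (ha : a ≤ h) :
    ((powersetCard h (univ : Finset (Fin n))).filter
        (fun T => (T ∩ ((univ : Finset (Fin n)).filter (fun j : Fin n => (j:ℕ) < k))).card = a)).card
      = k.choose a * (n-k).choose (h-a) := by
  set Ik := (univ : Finset (Fin n)).filter (fun j : Fin n => (j:ℕ) < k) with hIk
  set Ikc := (univ : Finset (Fin n)).filter (fun j : Fin n => ¬ (j:ℕ) < k) with hIkc
  have hdisj : ∀ ⦃x : Fin n⦄, x ∈ Ik → x ∉ Ikc := by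
    intro x hx hx'
    simp [hIk, hIkc] at hx hx'
    omega
  have target : ((powersetCard a Ik) ×ˢ (powersetCard (h-a) Ikc)).card
      = k.choose a * (n-k).choose (h-a) := by
    rw [Finset.card_product, Finset.card_powersetCard, Finset.card_powersetCard,
      card_lt n k hk]
    congr 2
    rw [hIkc]
    have := Finset.card_filter_add_card_filter_not
      (s := (univ : Finset (Fin n))) (p := fun j : Fin n => (j:ℕ) < k)
    rw [card_lt n k hk] at this
    simp only [Finset.card_univ, Fintype.card_fin] at this
    omega
  rw [← target]
  apply Finset.card_bij' (fun T _ => (T ∩ Ik, T \ Ik)) (fun P _ => P.1 ∪ P.2)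
  · intro T hT
    simp only [Finset.mem_filter, Finset.mem_powersetCard] at hT
    obtain ⟨⟨hsub, hcard⟩, hia⟩ := hT
    simp only [Finset.mem_product, Finset.mem_powersetCard]
    refine ⟨⟨Finset.inter_subset_right, hia⟩, ?_, ?_⟩
    · intro x hx
      simp only [hIkc, Finset.mem_filter, Finset.mem_univ, true_and]
      simp only [Finset.mem_sdiff, hIk, Finset.mem_filter, Finset.mem_univ, true_and] at hx
      exact hx.2
    · have := Finset.card_inter_add_card_sdiff T Ik
      omega
  · intro P hP
    simp only [Finset.mem_product, Finset.mem_powersetCard] at hP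
    obtain ⟨⟨h1sub, h1c⟩, h2sub, h2c⟩ := hP
    have hd : Disjoint P.1 P.2 := by
      apply Finset.disjoint_left.mpr
      intro x hx1 hx2
      exact hdisj (h1sub hx1) (h2sub hx2)
    simp only [Finset.mem_filter, Finset.mem_powersetCard]
    refine ⟨⟨Finset.subset_univ _, ?_⟩, ?_⟩
    · rw [Finset.card_union_of_disjoint hd, h1c, h2c]; omega
    · have : (P.1 ∪ P.2) ∩ Ik = P.1 := by
        ext x
        simp only [Finset.mem_inter, Finset.mem_union]
        constructor
        · rintro ⟨hx1 | hx2, hxk⟩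
          · exact hx1
          · exact absurd hxk (fun hxk => hdisj hxk (h2sub hx2))
        · intro hx; exact ⟨Or.inl hx, h1sub hx⟩
      rw [this, h1c]
  · intro T hT
    ext x
    simp only [Finset.mem_union, Finset.mem_inter, Finset.mem_sdiff]
    tauto
  · intro P hP
    simp only [Finset.mem_product, Finset.mem_powersetCard] at hP
    obtain ⟨⟨h1sub, h1c⟩, h2sub, h2c⟩ := hP
    have e1 : (P.1 ∪ P.2) ∩ Ik = P.1 := by
      ext x
      simp only [Finset.mem_inter, Finset.mem_union]
      constructor
      · rintro ⟨hx12, hxk⟩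
        rcases hx12 with hx1 | hx2
        · exact hx1
        · exact absurd hxk (fun hxk => hdisj hxk (h2sub hx2))
      · intro hx; exact ⟨Or.inl hx, h1sub hx⟩
    have e2 : (P.1 ∪ P.2) \ Ik = P.2 := by
      ext x
      simp only [Finset.mem_sdiff, Finset.mem_union]
      constructor
      · rintro ⟨hx1 | hx2, hxk⟩
        · exact absurd (h1sub hx1) hxk
        · exact hx2
      · intro hx
        exact ⟨Or.inr hx, fun hxk => hdisj hxk (h2sub hx)⟩
    rw [e1, e2]

lemma perm_sum_eq (n h k : ℕ) (hh : h ≤ n) (hk : k ≤ n) (Gr : ℕ → ℝ) :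
    ∑ σ : Equiv.Perm (Fin n),
        Gr (((univ : Finset (Fin n)).filter
          (fun j : Fin n => ((σ j : Fin n) : ℕ) < h ∧ (j:ℕ) < k)).card)
      = ∑ a ∈ range (h+1),
          ((h.factorial : ℝ) * (n-h).factorial * (k.choose a * (n-k).choose (h-a))) * Gr a := by
  set Ik := (univ : Finset (Fin n)).filter (fun j : Fin n => (j:ℕ) < k) with hIk
  set Φ : Equiv.Perm (Fin n) → Finset (Fin n)
    := fun σ => (univ : Finset (Fin n)).filter (fun j : Fin n => ((σ j : Fin n) : ℕ) < h) with hΦ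
  have hfilter : ∀ σ : Equiv.Perm (Fin n),
      ((univ : Finset (Fin n)).filter
        (fun j : Fin n => ((σ j : Fin n) : ℕ) < h ∧ (j:ℕ) < k)) = Φ σ ∩ Ik := by
    intro σ
    ext j
    simp [hΦ, hIk]
  have hmaps : ∀ σ ∈ (univ : Finset (Equiv.Perm (Fin n))), Φ σ ∈ powersetCard h (univ : Finset (Fin n)) := by
    intro σ _
    rw [Finset.mem_powersetCard]
    exact ⟨Finset.filter_subset _ _, card_perm_lt n h hh σ⟩
  rw [← Finset.sum_fiberwise_of_maps_to hmaps
    (fun σ => Gr (((univ : Finset (Fin n)).filter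
      (fun j : Fin n => ((σ j : Fin n) : ℕ) < h ∧ (j:ℕ) < k)).card))]
  have inner : ∀ T ∈ powersetCard h (univ : Finset (Fin n)),
      ∑ σ ∈ (univ : Finset (Equiv.Perm (Fin n))).filter (fun σ => Φ σ = T),
          Gr (((univ : Finset (Fin n)).filter
            (fun j : Fin n => ((σ j : Fin n) : ℕ) < h ∧ (j:ℕ) < k)).card)
        = ((h.factorial : ℝ) * (n-h).factorial) * Gr ((T ∩ Ik).card) := by
    intro T hT
    rw [Finset.mem_powersetCard] at hT
    have hconst : ∀ σ ∈ (univ : Finset (Equiv.Perm (Fin n))).filter (fun σ => Φ σ = T),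
        Gr (((univ : Finset (Fin n)).filter
          (fun j : Fin n => ((σ j : Fin n) : ℕ) < h ∧ (j:ℕ) < k)).card) = Gr ((T ∩ Ik).card) := by
      intro σ hσ
      simp only [Finset.mem_filter, Finset.mem_univ, true_and] at hσ
      rw [hfilter σ, hσ]
    rw [Finset.sum_congr rfl hconst, Finset.sum_const, nsmul_eq_mul]
    have hcard : ((univ : Finset (Equiv.Perm (Fin n))).filter (fun σ => Φ σ = T)).card
        = h.factorial * (n-h).factorial := by
      rw [← perm_fiber_card n h hh T hT.2]
      apply Finset.card_bij (fun σ _ => σ)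
      · intro σ hσ
        simp only [Finset.mem_filter, Finset.mem_univ, true_and] at hσ ⊢
        intro j
        rw [← hσ, hΦ]
        simp
      · intro _ _ _ _ hs; exact hs
      · intro σ hσ
        refine ⟨σ, ?_, rfl⟩
        simp only [Finset.mem_filter, Finset.mem_univ, true_and] at hσ ⊢
        rw [hΦ]
        ext j
        simp [hσ j]
    rw [hcard]
    push_cast
    ring
  rw [Finset.sum_congr rfl inner]
  -- now fiber over a
  have hmaps2 : ∀ T ∈ powersetCard h (univ : Finset (Fin n)), (T ∩ Ik).card ∈ range (h+1) := by
    intro T hT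
    rw [Finset.mem_powersetCard] at hT
    rw [Finset.mem_range]
    have : (T ∩ Ik).card ≤ T.card := Finset.card_le_card Finset.inter_subset_left
    omega
  rw [← Finset.sum_fiberwise_of_maps_to hmaps2
    (fun T => ((h.factorial : ℝ) * (n-h).factorial) * Gr ((T ∩ Ik).card))]
  apply Finset.sum_congr rfl
  intro a ha
  rw [Finset.mem_range] at ha
  have hconst2 : ∀ T ∈ (powersetCard h (univ : Finset (Fin n))).filter (fun T => (T ∩ Ik).card = a),
      ((h.factorial : ℝ) * (n-h).factorial) * Gr ((T ∩ Ik).card)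
        = ((h.factorial : ℝ) * (n-h).factorial) * Gr a := by
    intro T hT
    simp only [Finset.mem_filter] at hT
    rw [hT.2]
  rw [Finset.sum_congr rfl hconst2, Finset.sum_const, nsmul_eq_mul]
  rw [set_fiber_card n h k a hk (by omega)]
  push_cast
  ring

lemma half_sum (n : ℕ) (τ : Equiv.Perm (Fin n)) (hτ : Equiv.Perm.sign τ = -1)
    (F : Equiv.Perm (Fin n) → ℝ) (hF : ∀ σ, F (σ * τ) = F σ) :
    ∑ σ : Equiv.Perm (Fin n), F σ
      = 2 * ∑ σ : alternatingGroup (Fin n), F (σ : Equiv.Perm (Fin n)) := by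
  classical
  have hsub : ∑ σ ∈ (univ : Finset (Equiv.Perm (Fin n))).filter
        (fun σ => σ ∈ alternatingGroup (Fin n)), F σ
      = ∑ σ : alternatingGroup (Fin n), F (σ : Equiv.Perm (Fin n)) := by
    rw [Finset.sum_subtype]
    intro σ
    simp
  have hbij : ∑ σ ∈ (univ : Finset (Equiv.Perm (Fin n))).filter
        (fun σ => ¬ σ ∈ alternatingGroup (Fin n)), F σ
      = ∑ σ ∈ (univ : Finset (Equiv.Perm (Fin n))).filter
        (fun σ => σ ∈ alternatingGroup (Fin n)), F σ := by
    apply Finset.sum_bij (fun σ _ => σ * τ)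
    · intro σ hσ
      simp only [Finset.mem_filter, Finset.mem_univ, true_and,
        Equiv.Perm.mem_alternatingGroup] at *
      rw [Equiv.Perm.sign_mul, hτ]
      rcases Int.units_eq_one_or (Equiv.Perm.sign σ) with hs | hs
      · exact absurd hs hσ
      · rw [hs]; rfl
    · intro σ₁ _ σ₂ _ heq
      exact mul_right_cancel heq
    · intro σ hσ
      refine ⟨σ * τ⁻¹, ?_, by simp⟩
      simp only [Finset.mem_filter, Finset.mem_univ, true_and,
        Equiv.Perm.mem_alternatingGroup] at *
      rw [Equiv.Perm.sign_mul, hσ]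
      simp [hτ]
    · intro σ _
      exact (hF σ).symm
  calc ∑ σ : Equiv.Perm (Fin n), F σ
      = ∑ σ ∈ (univ : Finset (Equiv.Perm (Fin n))).filter
          (fun σ => σ ∈ alternatingGroup (Fin n)), F σ
        + ∑ σ ∈ (univ : Finset (Equiv.Perm (Fin n))).filter
          (fun σ => ¬ σ ∈ alternatingGroup (Fin n)), F σ :=
        (Finset.sum_filter_add_sum_filter_not _ _ _).symm
    _ = 2 * ∑ σ : alternatingGroup (Fin n), F (σ : Equiv.Perm (Fin n)) := by
        rw [hbij, hsub]; ring

lemma exists_tau (n k : ℕ) (hn : 4 ≤ n) (k1 : 1 ≤ k) (k2 : k ≤ n - 1) :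
    ∃ τ : Equiv.Perm (Fin n), Equiv.Perm.sign τ = -1
      ∧ ∀ j : Fin n, (((τ j : Fin n) : ℕ) < k ↔ (j:ℕ) < k) := by
  by_cases hk2 : 2 ≤ k
  · refine ⟨Equiv.swap ⟨0, by omega⟩ ⟨1, by omega⟩, ?_, ?_⟩
    · exact Equiv.Perm.sign_swap (by simp [Fin.ext_iff])
    · intro j
      rcases eq_or_ne j ⟨0, by omega⟩ with rfl | h0
      · rw [Equiv.swap_apply_left]; simp; omega
      rcases eq_or_ne j ⟨1, by omega⟩ with rfl | h1
      · rw [Equiv.swap_apply_right]; simp; omega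
      · rw [Equiv.swap_apply_of_ne_of_ne h0 h1]
  · refine ⟨Equiv.swap ⟨1, by omega⟩ ⟨2, by omega⟩, ?_, ?_⟩
    · exact Equiv.Perm.sign_swap (by simp [Fin.ext_iff])
    · intro j
      rcases eq_or_ne j ⟨1, by omega⟩ with rfl | h0
      · rw [Equiv.swap_apply_left]; simp; omega
      rcases eq_or_ne j ⟨2, by omega⟩ with rfl | h1
      · rw [Equiv.swap_apply_right]; simp; omega
      · rw [Equiv.swap_apply_of_ne_of_ne h0 h1]

end Stmt13Aux

open Stmt13Aux in
/-- For `n ≥ 5` and `1 ≤ h, k ≤ n-1`, with `m = ⌊hk/n⌋`,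
`sₙ(z^{(n,h)}, z^{(n,k)}) = (n²(h-m)(k-m))/(2hk(n-h)(n-k)) · C(n,h)⁻¹ · C(k,m) · C(n-k,h-m)`. -/
theorem stmt_13 (n h k : ℕ) (hn : 5 ≤ n) (h1 : 1 ≤ h) (h2 : h ≤ n - 1)
    (k1 : 1 ≤ k) (k2 : k ≤ n - 1) :
    snBil n (zvec n h) (zvec n k) =
      ((n : ℝ) ^ 2 * ((h : ℝ) - (h * k / n : ℕ)) * ((k : ℝ) - (h * k / n : ℕ))) /
          (2 * h * k * ((n : ℝ) - h) * ((n : ℝ) - k)) *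
        ((n.choose h : ℝ))⁻¹ * (k.choose (h * k / n) : ℝ) *
        ((n - k).choose (h - h * k / n) : ℝ) := by
  classical
  have hn2 : 2 ≤ n := by omega
  have hnR : (0:ℝ) < n := by positivity
  have hhR : (0:ℝ) < h := by exact_mod_cast h1
  have hkR : (0:ℝ) < k := by exact_mod_cast k1
  have hnhR : (0:ℝ) < (n:ℝ) - h := by
    have : (h:ℝ) < n := by exact_mod_cast (by omega : h < n)
    linarith
  have hnkR : (0:ℝ) < (n:ℝ) - k := by
    have : (k:ℝ) < n := by exact_mod_cast (by omega : k < n)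
    linarith
  set F : Equiv.Perm (Fin n) → ℝ
    := fun σ => |(1 / (n : ℝ)) * ∑ j, zvec n h (σ j) * zvec n k j| with hF
  set C : ℝ := (n:ℝ)^2 / (4 * h * k * ((n:ℝ) - h) * ((n:ℝ) - k)) with hC
  have hCpos : 0 < C := by rw [hC]; positivity
  set Gr : ℕ → ℝ := fun a => |(a:ℝ)*n - h*k| with hGr
  -- F in terms of Gr
  have hFeq : ∀ σ : Equiv.Perm (Fin n),
      F σ = C * Gr (((univ : Finset (Fin n)).filter
        (fun j : Fin n => ((σ j : Fin n) : ℕ) < h ∧ (j:ℕ) < k)).card) := by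
    intro σ
    rw [hF]
    simp only
    rw [innerSumEval n h k h1 h2 k1 k2 hn2 σ]
    rw [abs_div, abs_of_pos (by positivity : (0:ℝ) < 4 * h * k * ((n:ℝ) - h) * ((n:ℝ) - k)),
      abs_mul, abs_of_nonneg (by positivity : (0:ℝ) ≤ (n:ℝ)^2)]
    rw [hC, hGr]
    ring
  -- invariance under τ
  obtain ⟨τ, hτsign, hτk⟩ := exists_tau n k (by omega) k1 k2
  have hzk : ∀ j : Fin n, zvec n k (τ j) = zvec n k j := by
    intro j
    unfold zvec
    exact if_congr (hτk j) rfl rfl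
  have hFinv : ∀ σ, F (σ * τ) = F σ := by
    intro σ
    rw [hF]
    simp only
    congr 1
    congr 1
    apply Fintype.sum_equiv τ
    intro j
    rw [Equiv.Perm.mul_apply, hzk j]
  -- main computation
  have hhalf := half_sum n τ hτsign F hFinv
  have hperm : ∑ σ : Equiv.Perm (Fin n), F σ
      = C * ∑ a ∈ range (h+1),
          ((h.factorial : ℝ) * (n-h).factorial * (k.choose a * (n-k).choose (h-a))) * Gr a := by
    calc ∑ σ : Equiv.Perm (Fin n), F σ
        = ∑ σ : Equiv.Perm (Fin n), C * Gr (((univ : Finset (Fin n)).filter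
            (fun j : Fin n => ((σ j : Fin n) : ℕ) < h ∧ (j:ℕ) < k)).card) :=
          Finset.sum_congr rfl (fun σ _ => hFeq σ)
      _ = C * ∑ σ : Equiv.Perm (Fin n), Gr (((univ : Finset (Fin n)).filter
            (fun j : Fin n => ((σ j : Fin n) : ℕ) < h ∧ (j:ℕ) < k)).card) :=
          (Finset.mul_sum _ _ _).symm
      _ = C * ∑ a ∈ range (h+1),
            ((h.factorial : ℝ) * (n-h).factorial * (k.choose a * (n-k).choose (h-a))) * Gr a := by
          rw [perm_sum_eq n h k (by omega) (by omega) Gr]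
  have hpull : ∑ a ∈ range (h+1),
        ((h.factorial : ℝ) * (n-h).factorial * (k.choose a * (n-k).choose (h-a))) * Gr a
      = ((h.factorial : ℝ) * (n-h).factorial)
        * ∑ a ∈ range (h+1), ((k.choose a : ℝ) * ((n-k).choose (h-a) : ℝ)) * Gr a := by
    rw [Finset.mul_sum]
    apply Finset.sum_congr rfl
    intro a _
    ring
  have habs : ∑ a ∈ range (h+1), ((k.choose a : ℝ) * ((n-k).choose (h-a) : ℝ)) * Gr a
      = 2 * ((h:ℝ) - (h*k/n : ℕ)) * ((k:ℝ) - (h*k/n : ℕ)) * (k.choose (h*k/n) : ℝ)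
          * ((n-k).choose (h - h*k/n) : ℝ) := by
    have hz := congrArg (Int.cast : ℤ → ℝ) (abs_sum_eq n h k h1 h2 k1 k2 hn2)
    push_cast [-Int.natCast_ediv] at hz
    rw [hGr]
    convert hz using 2
  have expand : snBil n (zvec n h) (zvec n k)
      = (2/(n.factorial : ℝ)) * ∑ σ : alternatingGroup (Fin n), F (σ : Equiv.Perm (Fin n)) := rfl
  have hAn : ∑ σ : alternatingGroup (Fin n), F (σ : Equiv.Perm (Fin n))
      = (1/2) * ∑ σ : Equiv.Perm (Fin n), F σ := by
    rw [hhalf]; ring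
  rw [expand, hAn, hperm, hpull, habs]
  have hfact : ((n.factorial : ℝ)) = (n.choose h : ℝ) * (h.factorial : ℝ) * ((n-h).factorial : ℝ) := by
    exact_mod_cast (Nat.choose_mul_factorial_mul_factorial (by omega : h ≤ n)).symm
  have hchoose : (0:ℝ) < (n.choose h : ℝ) := by
    exact_mod_cast Nat.choose_pos (by omega : h ≤ n)
  have hfac1 : (0:ℝ) < (h.factorial : ℝ) := by exact_mod_cast h.factorial_pos
  have hfac2 : (0:ℝ) < ((n-h).factorial : ℝ) := by exact_mod_cast (n-h).factorial_pos
  rw [hC, hfact]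
  field_simp
  ring
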